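/- Under the hypotheses of the stability theorem (W_n upper triangular, diagonal entries in [-1,0) bounded away from 0 by -P, off-diagonal entries bounded by Q, biases bounded by B), the implicit ResNet scheme (x_n) is stable in L^p norm: there exists a constant C (depending on x_0, M, P, Q, B, p but not on n) such that ‖x_n‖_p ≤ C for all n ∈ ℕ. -/

import Mathlib

theorem stmt_10 (M : ℕ) (P Q B : ℝ) (hP : 0 < P)
    (W : ℕ → Matrix (Fin M) (Fin M) ℝ) (b : ℕ → Fin M → ℝ) (x : ℕ → Fin M → ℝ)
    (htri : ∀ n, ∀ i j : Fin M, j < i → W n i j = 0)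
    (hdiag : ∀ n, ∀ m : Fin M, W n m m ∈ Set.Ico (-1 : ℝ) 0 ∧ W n m m ≤ -P)
    (hQ : ∀ n, ∀ i j : Fin M, i < j → |W n i j| ≤ Q)
    (hB : ∀ n, ∀ m : Fin M, |b n m| ≤ B)
    (hx : ∀ n, ∀ m : Fin M,
      x (n + 1) m = x n m + max 0 ((W n).mulVec (x (n + 1)) m + b n m))
    (p : ENNReal) [Fact (1 ≤ p)] :
    ∃ C : ℝ, ∀ n, ‖(WithLp.equiv p (Fin M → ℝ)).symm (x n)‖ ≤ C := by
  classical
  set Q' : ℝ := max Q 0 with hQ'def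
  set B' : ℝ := max B 0 with hB'def
  have hQ'0 : 0 ≤ Q' := le_max_right _ _
  have hB'0 : 0 ≤ B' := le_max_right _ _
  have hmono : ∀ n (i : Fin M), x n i ≤ x (n+1) i := by
    intro n i
    have := le_max_left (0:ℝ) ((W n).mulVec (x (n + 1)) i + b n i)
    rw [hx n i]; linarith
  -- per-coordinate bound lemma
  have key : ∀ (i : Fin M) (c : ℝ), 0 ≤ c →
      (∀ n (j : Fin M), (i:ℕ) < (j:ℕ) → |x n j| ≤ c) →
      ∀ n, |x n i| ≤ max |x 0 i| ((Q' * M * c + B') / P) := by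
    intro i c hc0 hhi
    set R : ℝ := Q' * M * c + B' with hR
    have hR0 : 0 ≤ R := by positivity
    set K : ℝ := max |x 0 i| (R / P) with hKdef
    have hRPK : R / P ≤ K := le_max_right _ _
    have hK0 : 0 ≤ K := le_trans (abs_nonneg _) (le_max_left _ _)
    intro n
    induction n with
    | zero => exact le_max_left _ _
    | succ n ih =>
      -- split the matrix-vector product
      have hmv : (W n).mulVec (x (n+1)) i
          = W n i i * x (n+1) i + ∑ j ∈ Finset.univ.erase i, W n i j * x (n+1) j := by
        rw [Matrix.mulVec, dotProduct,
          ← Finset.add_sum_erase _ (fun j => W n i j * x (n+1) j) (Finset.mem_univ i)]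
      have hs : (∑ j ∈ Finset.univ.erase i, W n i j * x (n+1) j) + b n i ≤ R := by
        have hsum : ∑ j ∈ Finset.univ.erase i, W n i j * x (n+1) j ≤ Q' * M * c := by
          calc ∑ j ∈ Finset.univ.erase i, W n i j * x (n+1) j
              ≤ ∑ j ∈ Finset.univ.erase i, Q' * c := by
                apply Finset.sum_le_sum
                intro j hj
                have hji : j ≠ i := Finset.ne_of_mem_erase hj
                rcases lt_or_gt_of_ne hji with hlt | hgt
                · rw [htri n i j hlt, zero_mul]; exact mul_nonneg hQ'0 hc0
                · have h1 : |W n i j| ≤ Q' := le_trans (hQ n i j hgt) (le_max_left _ _)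
                  have h2 : |x (n+1) j| ≤ c := hhi (n+1) j hgt
                  calc W n i j * x (n+1) j ≤ |W n i j * x (n+1) j| := le_abs_self _
                    _ = |W n i j| * |x (n+1) j| := abs_mul _ _
                    _ ≤ Q' * c := mul_le_mul h1 h2 (abs_nonneg _) hQ'0
            _ ≤ Q' * M * c := by
                rw [Finset.sum_const]
                have hcard : ((Finset.univ.erase i).card : ℝ) ≤ (M : ℝ) := by
                  have := Finset.card_erase_le (s := (Finset.univ : Finset (Fin M))) (a := i)
                  simp only [Finset.card_univ, Fintype.card_fin] at this
                  exact_mod_cast le_trans this (le_refl M)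
                have : ((Finset.univ.erase i).card : ℝ) * (Q' * c) ≤ (M : ℝ) * (Q' * c) :=
                  mul_le_mul_of_nonneg_right hcard (by positivity)
                rw [nsmul_eq_mul]
                nlinarith
        have hb' : b n i ≤ B' := le_trans (le_abs_self _) (le_trans (hB n i) (le_max_left _ _))
        rw [hR]; linarith
      set a : ℝ := W n i i with hadef
      have haP : a ≤ -P := (hdiag n i).2
      have hxeq := hx n i
      rw [hmv] at hxeq
      have hlow : -K ≤ x (n+1) i := by
        have h1 := hmono n i
        have h2 := (abs_le.mp ih).1
        linarith
      have hup : x (n+1) i ≤ K := by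
        rcases le_or_gt (a * x (n+1) i + (∑ j ∈ Finset.univ.erase i, W n i j * x (n+1) j) + b n i) 0 with ht | ht
        · rw [max_eq_left ht] at hxeq
          have := (abs_le.mp ih).2
          rw [hxeq]; linarith
        · -- activation positive: x(n+1) i ≤ R/P
          have hy : x (n+1) i ≤ R / P := by
            rcases le_or_gt 0 (x (n+1) i) with hy0 | hy0
            · rw [le_div_iff₀ hP]
              nlinarith [mul_nonneg hy0 (by linarith : (0:ℝ) ≤ -a - P)]
            · exact le_trans hy0.le (div_nonneg hR0 hP.le)
          linarith
      exact abs_le.mpr ⟨hlow, hup⟩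
  -- global constants
  set A : ℝ := B'/P + ∑ i, |x 0 i| with hAdef
  have hA0 : 0 ≤ A := by positivity
  let cfun : ℕ → ℝ := fun k => Nat.rec 0 (fun _ ck => A + ck + (Q' * M * ck + B')/P) k
  have main : ∀ k : ℕ, 0 ≤ cfun k ∧
      ∀ n (i : Fin M), M ≤ (i:ℕ) + k → |x n i| ≤ cfun k := by
    intro k
    induction k with
    | zero =>
      refine ⟨le_refl _, fun n i hi => ?_⟩
      exact absurd hi (by have := i.isLt; omega)
    | succ k ih =>
      obtain ⟨hck0, hck⟩ := ih
      have hstep : cfun (k+1) = A + cfun k + (Q' * M * cfun k + B')/P := rfl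
      constructor
      · rw [hstep]
        have : 0 ≤ (Q' * M * cfun k + B')/P := by positivity
        linarith
      · intro n i hi
        have hhi : ∀ m (j : Fin M), (i:ℕ) < (j:ℕ) → |x m j| ≤ cfun k := by
          intro m j hij
          exact hck m j (by omega)
        have := key i (cfun k) hck0 hhi n
        refine le_trans this (max_le ?_ ?_)
        · rw [hstep]
          have h1 : |x 0 i| ≤ ∑ j, |x 0 j| :=
            Finset.single_le_sum (f := fun j => |x 0 j|) (fun j _ => abs_nonneg (x 0 j))
              (Finset.mem_univ i)
          have h2 : 0 ≤ (Q' * M * cfun k + B')/P := by positivity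
          have h3 : 0 ≤ B'/P := by positivity
          linarith [hAdef]
        · rw [hstep]; linarith
  obtain ⟨hc0, hc⟩ := main M
  have hcoord : ∀ n (i : Fin M), |x n i| ≤ cfun M := fun n i =>
    hc n i (by omega)
  -- transfer to the Lp norm
  have Halip := PiLp.antilipschitzWith_ofLp p (fun _ : Fin M => ℝ)
  refine ⟨((Fintype.card (Fin M) : NNReal) ^ (1 / p).toReal : NNReal) * cfun M, fun n => ?_⟩
  have hdist := Halip.le_mul_dist ((WithLp.equiv p (Fin M → ℝ)).symm (x n)) 0
  simp only [dist_zero_right, Equiv.apply_symm_apply, map_zero] at hdist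
  have heq0 : WithLp.equiv p (Fin M → ℝ) 0 = 0 := rfl
  have hdist' : ‖(WithLp.equiv p (Fin M → ℝ)).symm (x n)‖
      ≤ ((Fintype.card (Fin M) : NNReal) ^ (1 / p).toReal : NNReal) * ‖x n‖ := by
    have := Halip.le_mul_dist ((WithLp.equiv p (Fin M → ℝ)).symm (x n)) 0
    rw [dist_zero_right, dist_eq_norm] at this
    simpa [heq0] using this
  have hsup : ‖x n‖ ≤ cfun M := by
    apply pi_norm_le_iff_of_nonneg hc0 |>.mpr
    intro i
    rw [Real.norm_eq_abs]
    exact hcoord n i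
  calc ‖(WithLp.equiv p (Fin M → ℝ)).symm (x n)‖
      ≤ ((Fintype.card (Fin M) : NNReal) ^ (1 / p).toReal : NNReal) * ‖x n‖ := hdist'
    _ ≤ ((Fintype.card (Fin M) : NNReal) ^ (1 / p).toReal : NNReal) * cfun M := by
        apply mul_le_mul_of_nonneg_left hsup (by positivity)
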